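/- Let Σ be a finite nonempty alphabet and let β be the 2×2 array pattern with four pairwise distinct variables, β = [x₁ x₂; x₃ x₄]. Then for every z ∈ {p, r, c, rc}, L_{Σ,h}(β) ≠ L_{Σ,z}(β). -/

import Mathlib

/-- A nonempty rectangular two-dimensional word (array) over `σ`. -/
structure Arr (σ : Type) : Type where
  rows : ℕ
  cols : ℕ
  rows_pos : 0 < rows
  cols_pos : 0 < cols
  entry : Fin rows → Fin cols → σ

namespace Arr

variable {σ γ : Type}

/-- Column concatenation: place `V` to the right of `U`; `none` if heights differ. -/
def colCat (U V : Arr σ) : Option (Arr σ) :=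
  if h : U.rows = V.rows then
    some { rows := U.rows
           cols := U.cols + V.cols
           rows_pos := U.rows_pos
           cols_pos := by have := U.cols_pos; omega
           entry := fun i j =>
             if hj : (j : ℕ) < U.cols then U.entry i ⟨j, hj⟩
             else V.entry (Fin.cast h i) ⟨(j : ℕ) - U.cols, by have := j.isLt; omega⟩ }
  else none

/-- Row concatenation: place `V` below `U`; `none` if widths differ. -/
def rowCat (U V : Arr σ) : Option (Arr σ) :=
  if h : U.cols = V.cols then
    some { rows := U.rows + V.rows
           cols := U.cols
           rows_pos := by have := U.rows_pos; omega
           cols_pos := U.cols_pos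
           entry := fun i j =>
             if hi : (i : ℕ) < U.rows then U.entry ⟨i, hi⟩ j
             else V.entry ⟨(i : ℕ) - U.rows, by have := i.isLt; omega⟩ (Fin.cast h j) }
  else none

/-- A two-dimensional morphism: compatible with both concatenations,
with "both sides undefined" counting as equal. -/
def IsMorphism (h : Arr σ → Arr γ) : Prop :=
  (∀ V W : Arr σ, Option.map h (colCat V W) = colCat (h V) (h W)) ∧
  (∀ V W : Arr σ, Option.map h (rowCat V W) = rowCat (h V) (h W))

/-- Concatenate a nonempty list of (possibly undefined) arrays with the
given partial concatenation operation; `none` on the empty list. -/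
def catListO (op : Arr σ → Arr σ → Option (Arr σ)) : List (Option (Arr σ)) → Option (Arr σ)
  | [] => none
  | [a] => a
  | a :: b :: rest => a.bind fun x => (catListO op (b :: rest)).bind fun y => op x y

/-- `g_{⦶,⊖}`: substitute and assemble, first column-concatenating each row,
then row-concatenating the rows. -/
def subCR {X : Type} (g : X → Arr σ) (α : Arr X) : Option (Arr σ) :=
  catListO rowCat (List.ofFn fun i : Fin α.rows =>
    catListO colCat (List.ofFn fun j : Fin α.cols => some (g (α.entry i j))))

/-- `g_{⊖,⦶}`: substitute and assemble, first row-concatenating each column,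
then column-concatenating the columns. -/
def subRC {X : Type} (g : X → Arr σ) (α : Arr X) : Option (Arr σ) :=
  catListO colCat (List.ofFn fun j : Fin α.cols =>
    catListO rowCat (List.ofFn fun i : Fin α.rows => some (g (α.entry i j))))

/-- A substitution is uniform if all images have the same dimensions. -/
def Uniform {X : Type} (g : X → Arr σ) : Prop :=
  ∃ m n : ℕ, ∀ x : X, (g x).rows = m ∧ (g x).cols = n

end Arr

open Arr

/-- The five modes of array pattern languages. -/
inductive Mode | h | p | r | c | rc
deriving DecidableEq

/-- The array pattern language of an array pattern (an array over the
variables `ℕ`) in each mode. -/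
def langOf (σ : Type) : Mode → Arr ℕ → Set (Arr σ)
  | Mode.h, α => {W | ∃ g : Arr ℕ → Arr σ, IsMorphism g ∧ g α = W}
  | Mode.p, α => {W | ∃ s : ℕ → Arr σ, subCR s α = some W ∧ subRC s α = some W}
  | Mode.r, α => {W | ∃ s : ℕ → Arr σ, subCR s α = some W}
  | Mode.c, α => {W | ∃ s : ℕ → Arr σ, subRC s α = some W}
  | Mode.rc, α =>
      {W | ∃ s : ℕ → Arr σ, subCR s α = some W} ∪ {W | ∃ s : ℕ → Arr σ, subRC s α = some W}

/-- The 2×2 array pattern `[x₁ x₂; x₃ x₄]` with four pairwise distinct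
variables. -/
def beta4 : Arr ℕ :=
  ⟨2, 2, by norm_num, by norm_num, fun i j => 2 * (i : ℕ) + (j : ℕ)⟩

section Aux

variable {σ : Type}

lemma arr_ext {U V : Arr σ} (hr : U.rows = V.rows) (hc : U.cols = V.cols)
    (he : ∀ (i j : ℕ) (hi : i < U.rows) (hj : j < U.cols),
      U.entry ⟨i, hi⟩ ⟨j, hj⟩ = V.entry ⟨i, hr ▸ hi⟩ ⟨j, hc ▸ hj⟩) : U = V := by
  obtain ⟨ur, uc, hur, huc, ue⟩ := U
  obtain ⟨vr, vc, hvr, hvc, ve⟩ := V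
  dsimp at hr hc he
  subst hr; subst hc
  simp only [Arr.mk.injEq, heq_eq_eq, true_and]
  funext i j
  exact he i j i.isLt j.isLt

lemma colCat_some {X Y Z : Arr σ} (h : colCat X Y = some Z) :
    Z.rows = X.rows ∧ Z.cols = X.cols + Y.cols := by
  unfold colCat at h
  split at h
  · injection h with h'; subst h'; exact ⟨rfl, rfl⟩
  · simp at h

lemma rowCat_some {X Y Z : Arr σ} (h : rowCat X Y = some Z) :
    Z.cols = X.cols ∧ X.cols = Y.cols := by
  unfold rowCat at h
  split at h
  · injection h with h'; subst h'; exact ⟨rfl, ‹_›⟩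
  · simp at h

/-- The constant `(m+1) × (n+1)` array filled with `a`. -/
def K (a : σ) (m n : ℕ) : Arr σ :=
  ⟨m + 1, n + 1, Nat.succ_pos _, Nat.succ_pos _, fun _ _ => a⟩

lemma colCat_K (a : σ) (m n n' : ℕ) :
    colCat (K a m n) (K a m n') = some (K a m (n + n' + 1)) := by
  unfold colCat
  rw [dif_pos (show (K a m n).rows = (K a m n').rows from rfl)]
  congr 1
  refine arr_ext rfl (by simp [K]; omega) ?_
  intro i j hi hj
  simp only [K]
  exact dite_eq_right_iff.mpr fun _ => rfl

lemma rowCat_K (a : σ) (m m' n : ℕ) :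
    rowCat (K a m n) (K a m' n) = some (K a (m + m' + 1) n) := by
  unfold rowCat
  rw [dif_pos (show (K a m n).cols = (K a m' n).cols from rfl)]
  congr 1
  refine arr_ext (by simp [K]; omega) rfl ?_
  intro i j hi hj
  simp only [K]
  exact dite_eq_right_iff.mpr fun _ => rfl

/-- The 1×1 array over ℕ with entry `k`. -/
def e (k : ℕ) : Arr ℕ := ⟨1, 1, one_pos, one_pos, fun _ _ => k⟩

/-- Left column of `beta4`. -/
def colA : Arr ℕ := ⟨2, 1, two_pos, one_pos, fun i _ => 2 * (i : ℕ)⟩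

/-- Right column of `beta4`. -/
def colB : Arr ℕ := ⟨2, 1, two_pos, one_pos, fun i _ => 2 * (i : ℕ) + 1⟩

lemma rowCat_e02 : rowCat (e 0) (e 2) = some colA := by
  unfold rowCat
  rw [dif_pos (show (e 0).cols = (e 2).cols from rfl)]
  congr 1
  refine arr_ext rfl rfl ?_
  intro i j hi hj
  simp only [e, colA] at hi hj ⊢
  by_cases h : i < 1 <;> simp [h] <;> omega

lemma rowCat_e13 : rowCat (e 1) (e 3) = some colB := by
  unfold rowCat
  rw [dif_pos (show (e 1).cols = (e 3).cols from rfl)]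
  congr 1
  refine arr_ext rfl rfl ?_
  intro i j hi hj
  simp only [e, colB] at hi hj ⊢
  by_cases h : i < 1 <;> simp [h] <;> omega

lemma colCat_AB : colCat colA colB = some beta4 := by
  unfold colCat
  rw [dif_pos (show colA.rows = colB.rows from rfl)]
  congr 1
  refine arr_ext rfl rfl ?_
  intro i j hi hj
  simp only [colA, colB, beta4, Fin.coe_cast] at hi hj ⊢
  by_cases h : j < 1 <;> simp [h] <;> omega

/-- The witness substitution. -/
def wsub (a : σ) : ℕ → Arr σ := fun k => if k = 1 ∨ k = 3 then K a 0 1 else K a 0 0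

lemma subCR_wsub (a : σ) : subCR (wsub a) beta4 = some (K a 1 2) := by
  unfold subCR
  dsimp only [beta4]
  simp only [List.ofFn_succ, List.ofFn_zero, catListO]
  norm_num [wsub]
  simp only [colCat_K, Option.bind_some, Option.bind_some, rowCat_K]

lemma subRC_wsub (a : σ) : subRC (wsub a) beta4 = some (K a 1 2) := by
  unfold subRC
  dsimp only [beta4]
  simp only [List.ofFn_succ, List.ofFn_zero, catListO]
  norm_num [wsub]
  simp only [rowCat_K, Option.bind_some, Option.bind_some, colCat_K]

/-- No morphic image of `beta4` has an odd number of columns. -/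
lemma not_h_mem (a : σ) : K a 1 2 ∉ langOf σ Mode.h beta4 := by
  rintro ⟨g, ⟨gcol, grow⟩, hg⟩
  -- g beta4 = (g colA) ⦶ (g colB)
  have h1 : colCat (g colA) (g colB) = some (g beta4) := by
    rw [← gcol, colCat_AB]; rfl
  have h2 : rowCat (g (e 0)) (g (e 2)) = some (g colA) := by
    rw [← grow, rowCat_e02]; rfl
  have h3 : rowCat (g (e 1)) (g (e 3)) = some (g colB) := by
    rw [← grow, rowCat_e13]; rfl
  have h4 : ∃ Z, rowCat (g (e 0)) (g (e 1)) = some Z := by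
    obtain ⟨T, hT⟩ : ∃ T, rowCat (e 0) (e 1) = some T := by
      unfold rowCat
      rw [dif_pos (show (e 0).cols = (e 1).cols from rfl)]
      exact ⟨_, rfl⟩
    have h5 := grow (e 0) (e 1)
    rw [hT] at h5
    exact ⟨_, h5.symm⟩
  obtain ⟨Z, hZ⟩ := h4
  have c1 := (colCat_some h1).2
  have c2 := (rowCat_some h2).1
  have c3 := (rowCat_some h3).1
  have c4 := (rowCat_some hZ).2
  have hw : (g beta4).cols = 3 := by rw [hg]; rfl
  have hA0 : (g (e 0)).cols ≥ 1 := (g (e 0)).cols_pos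
  omega

lemma mem_r (a : σ) : K a 1 2 ∈ langOf σ Mode.r beta4 := ⟨wsub a, subCR_wsub a⟩

lemma mem_c (a : σ) : K a 1 2 ∈ langOf σ Mode.c beta4 := ⟨wsub a, subRC_wsub a⟩

lemma mem_p (a : σ) : K a 1 2 ∈ langOf σ Mode.p beta4 :=
  ⟨wsub a, subCR_wsub a, subRC_wsub a⟩

lemma mem_rc (a : σ) : K a 1 2 ∈ langOf σ Mode.rc beta4 :=
  Or.inl ⟨wsub a, subCR_wsub a⟩

end Aux

/-- for every mode `z ∈ {p, r, c, rc}`, the `h` pattern language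
of `β = [x₁ x₂; x₃ x₄]` differs from its `z` pattern language. -/
theorem stmt4 {σ : Type} [Fintype σ] [Nonempty σ] (z : Mode) (hz : z ≠ Mode.h) :
    langOf σ Mode.h beta4 ≠ langOf σ z beta4 := by
  obtain ⟨a⟩ := ‹Nonempty σ›
  intro heq
  have hnot := not_h_mem a
  cases z with
  | h => exact hz rfl
  | p => rw [heq] at hnot; exact hnot (mem_p a)
  | r => rw [heq] at hnot; exact hnot (mem_r a)
  | c => rw [heq] at hnot; exact hnot (mem_c a)
  | rc => rw [heq] at hnot; exact hnot (mem_rc a)
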